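/- Let α : [0,∞) → (0,1) be continuous, let λ > 0 and t > 0. Then exp(−∫_0^t λ^{α(s)} ds) + ∑_{n=1}^∞ ∑_{r=1}^∞ ((−1)^{n+r}/r!) ∫_{[0,t]^r} λ^{β_r(s₁,…,s_r)} binom(β_r(s₁,…,s_r), n) ds₁⋯ds_r = 1. -/

import Mathlib

open MeasureTheory

/-- Generalized binomial coefficient `binom(x, n) = (∏_{j=0}^{n-1} (x - j)) / n!`. -/
noncomputable def gbinom (x : ℝ) (n : ℕ) : ℝ :=
  (∏ j ∈ Finset.range n, (x - (j : ℝ))) / (n.factorial : ℝ)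

/-- `β_r(s₁, …, s_r) = ∑_{j=1}^r α(s_j)`. -/
noncomputable def betaSum (α : ℝ → ℝ) {r : ℕ} (s : Fin r → ℝ) : ℝ :=
  ∑ j, α (s j)

open Finset Filter

noncomputable def bprod (x : ℝ) (N : ℕ) : ℝ :=
  ∏ j ∈ Finset.range N, (1 - x / (j + 1))

lemma gbinom_zero (x : ℝ) : gbinom x 0 = 1 := by simp [gbinom]

lemma bprod_succ (x : ℝ) (N : ℕ) :
    bprod x (N + 1) = bprod x N * (1 - x / (N + 1)) := by
  simp [bprod, Finset.prod_range_succ]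

lemma gbinom_succ (x : ℝ) (n : ℕ) :
    gbinom x (n + 1) = gbinom x n * ((x - n) / (n + 1)) := by
  have hfac : (((n+1).factorial : ℕ) : ℝ) = ((n:ℝ)+1) * (n.factorial : ℝ) := by
    rw [Nat.factorial_succ]; push_cast; ring
  rw [gbinom, gbinom, Finset.prod_range_succ, hfac, div_mul_div_comm,
    mul_comm ((n.factorial : ℝ)) ((n:ℝ)+1)]

lemma neg_pow_gbinom_succ (x : ℝ) (N : ℕ) :
    (-1 : ℝ) ^ (N + 1) * gbinom x (N + 1) = -(x / (N + 1)) * bprod x N := by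
  induction N with
  | zero => simp [gbinom_succ, gbinom_zero, bprod]
  | succ N ih =>
    have h2 : ((N:ℝ) + 1) ≠ 0 := by positivity
    have h3 : ((N:ℝ) + 1 + 1) ≠ 0 := by positivity
    rw [gbinom_succ x (N + 1), bprod_succ]
    push_cast
    have : (-1 : ℝ) ^ (N + 1 + 1) * (gbinom x (N + 1) * ((x - ((N:ℝ)+1)) / ((N:ℝ) + 1 + 1)))
        = ((-1 : ℝ) ^ (N + 1) * gbinom x (N + 1)) * ((((N:ℝ)+1) - x) / ((N:ℝ) + 1 + 1)) := by
      ring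
    rw [this, ih]
    field_simp

lemma sum_alt_gbinom (x : ℝ) (N : ℕ) :
    ∑ n ∈ range (N + 1), (-1 : ℝ) ^ n * gbinom x n = bprod x N := by
  induction N with
  | zero => simp [gbinom_zero, bprod]
  | succ N ih =>
    rw [Finset.sum_range_succ, ih, neg_pow_gbinom_succ, bprod_succ]
    push_cast
    ring


lemma bprod_nonneg {x : ℝ} (hx1 : x ≤ 1) (N : ℕ) : 0 ≤ bprod x N := by
  apply Finset.prod_nonneg
  intro j _
  have hj : (1:ℝ) ≤ (j:ℝ) + 1 := by have := Nat.cast_nonneg (α:=ℝ) j; linarith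
  have : x / ((j:ℝ) + 1) ≤ 1 := div_le_one_of_le₀ (hx1.trans hj) (by positivity)
  linarith

lemma abs_gbinom_succ {x : ℝ} (hx : 0 < x) (hx1 : x ≤ 1) (n : ℕ) :
    |gbinom x (n + 1)| = x / (n + 1) * bprod x n := by
  have h := neg_pow_gbinom_succ x n
  have h0 : 0 ≤ x / ((n:ℝ) + 1) * bprod x n := by
    have := bprod_nonneg hx1 n
    positivity
  calc |gbinom x (n + 1)| = |(-1 : ℝ) ^ (n + 1) * gbinom x (n + 1)| := by
        rw [abs_mul, abs_pow, abs_neg, abs_one, one_pow, one_mul]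
    _ = |(-(x / (n + 1)) * bprod x n)| := by rw [h]
    _ = |x / (n + 1) * bprod x n| := by rw [neg_mul, abs_neg]
    _ = x / (n + 1) * bprod x n := abs_of_nonneg h0

lemma base_abs_sum {x : ℝ} (hx : 0 < x) (hx1 : x ≤ 1) (N : ℕ) :
    ∑ n ∈ range N, |gbinom x n| ≤ 2 := by
  cases N with
  | zero => simp
  | succ M =>
    rw [Finset.sum_range_succ']
    simp only [gbinom_zero, abs_one]
    have key : ∑ n ∈ range M, |gbinom x (n + 1)| = 1 - bprod x M := by
      have : ∀ n ∈ range M, |gbinom x (n + 1)| = -((-1:ℝ)^(n+1) * gbinom x (n+1)) := by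
        intro n _
        rw [abs_gbinom_succ hx hx1, neg_pow_gbinom_succ]; ring
      rw [Finset.sum_congr rfl this, Finset.sum_neg_distrib]

      have h2 : ∑ n ∈ range (M + 1), (-1:ℝ)^n * gbinom x n
          = 1 + ∑ n ∈ range M, (-1:ℝ)^(n+1) * gbinom x (n+1) := by
        rw [Finset.sum_range_succ']
        simp [gbinom_zero]; ring
      have := sum_alt_gbinom x M
      rw [h2] at this
      linarith
    rw [key]
    have := bprod_nonneg hx1 M
    linarith

lemma gbinom_pascal (x : ℝ) (n : ℕ) :
    gbinom x (n + 1) = gbinom (x - 1) (n + 1) + gbinom (x - 1) n := by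
  have h : (((n+1).factorial : ℕ) : ℝ) = ((n:ℝ)+1) * (n.factorial : ℝ) := by
    rw [Nat.factorial_succ]; push_cast; ring
  have hprod : ∏ j ∈ range (n+1), (x - (j:ℝ)) = x * ∏ j ∈ range n, (x - 1 - (j:ℝ)) := by
    rw [Finset.prod_range_succ']
    simp only [Nat.cast_add, Nat.cast_one, Nat.cast_zero, sub_zero]
    rw [mul_comm]
    congr 1
    apply Finset.prod_congr rfl
    intro j _; push_cast; ring
  have hprod2 : ∏ j ∈ range (n+1), (x - 1 - (j:ℝ))
      = (∏ j ∈ range n, (x - 1 - (j:ℝ))) * (x - 1 - n) := Finset.prod_range_succ _ _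
  have hf : (n.factorial : ℝ) ≠ 0 := Nat.cast_ne_zero.2 n.factorial_ne_zero
  have hn : ((n:ℝ) + 1) ≠ 0 := by positivity
  rw [gbinom, gbinom, gbinom, hprod, hprod2, h]
  field_simp
  ring

lemma abs_sum_le (k : ℕ) : ∀ x : ℝ, 0 < x → x ≤ k + 1 →
    ∀ N, ∑ n ∈ range N, |gbinom x n| ≤ 2 ^ (k + 1) := by
  induction k with
  | zero =>
    intro x hx hx1 N
    have hx1' : x ≤ 1 := by push_cast at hx1; linarith
    simpa using base_abs_sum hx hx1' N
  | succ k ih =>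
    intro x hx hx1 N
    by_cases hcase : x ≤ k + 1
    · calc ∑ n ∈ range N, |gbinom x n| ≤ 2 ^ (k+1) := ih x hx hcase N
        _ ≤ 2 ^ (k+1+1) := by
            have h := pow_pos (by norm_num : (0:ℝ) < 2) (k+1)
            rw [pow_succ (2:ℝ) (k+1)]
            nlinarith
    · push_neg at hcase
      have hx' : 0 < x - 1 := by
        have hk1 : (1:ℝ) ≤ (k:ℝ) + 1 := by have := Nat.cast_nonneg (α:=ℝ) k; linarith
        linarith
      have hx1' : x - 1 ≤ (k:ℝ) + 1 := by push_cast at hx1 ⊢; linarith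
      cases N with
      | zero => simp
      | succ M =>
        rw [Finset.sum_range_succ']
        simp only [gbinom_zero, abs_one]
        have step : ∑ n ∈ range M, |gbinom x (n + 1)|
            ≤ ∑ n ∈ range M, (|gbinom (x-1) (n+1)| + |gbinom (x-1) n|) := by
          apply Finset.sum_le_sum
          intro n _
          rw [gbinom_pascal]
          exact abs_add_le _ _
        have s1 : ∑ n ∈ range M, |gbinom (x-1) (n+1)|
            = (∑ n ∈ range (M+1), |gbinom (x-1) n|) - 1 := by
          rw [Finset.sum_range_succ']
          simp [gbinom_zero]
        have h1 := ih (x-1) hx' hx1' (M+1)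
        have h2 := ih (x-1) hx' hx1' M
        rw [Finset.sum_add_distrib, s1] at step
        have : (2:ℝ) ^ (k+1+1) = 2^(k+1) + 2^(k+1) := by ring
        rw [this]
        linarith

lemma summable_abs_gbinom {x : ℝ} (hx : 0 < x) :
    Summable (fun n => |gbinom x n|) := by
  apply summable_of_sum_range_le (fun n => abs_nonneg _)
  intro N
  exact abs_sum_le ⌈x⌉₊ x hx (by
    have := Nat.le_ceil x
    push_cast
    linarith) N

lemma tsum_abs_gbinom_le {x : ℝ} (hx : 0 < x) :
    ∑' n, |gbinom x n| ≤ (2:ℝ) ^ (x + 2) := by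
  have hk : x ≤ (⌈x⌉₊ : ℝ) + 1 := by have := Nat.le_ceil x; linarith
  have h1 : ∑' n, |gbinom x n| ≤ (2:ℝ) ^ (⌈x⌉₊ + 1) :=
    Real.tsum_le_of_sum_range_le (fun n => abs_nonneg _) (abs_sum_le ⌈x⌉₊ x hx hk)
  refine h1.trans ?_
  have h2 : ((⌈x⌉₊ : ℝ) + 1) ≤ x + 2 := by
    have := Nat.ceil_lt_add_one hx.le
    linarith
  calc (2:ℝ) ^ (⌈x⌉₊ + 1) = (2:ℝ) ^ ((⌈x⌉₊ + 1 : ℕ) : ℝ) := by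
        rw [Real.rpow_natCast]
    _ ≤ (2:ℝ) ^ (x + 2) := by
        apply Real.rpow_le_rpow_of_exponent_le one_le_two
        push_cast; linarith
lemma bprod_tendsto_zero {x : ℝ} (hx : 0 < x) :
    Tendsto (fun N => bprod x N) atTop (nhds 0) := by
  set M := ⌈x⌉₊ with hM
  have hxM : x ≤ M := Nat.le_ceil x
  set H : ℕ → ℝ := fun N => ∑ j ∈ range N, (1:ℝ) / (j + 1) with hH
  have key : ∀ N, M ≤ N → |bprod x N| ≤ |bprod x M| * Real.exp (x * H M) * Real.exp (-(x * H N)) := by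
    intro N hN
    have hsplit : bprod x N = bprod x M * ∏ j ∈ Ico M N, (1 - x / (j + 1)) := by
      rw [bprod, bprod, Finset.prod_range_mul_prod_Ico _ hN]
    have hbd : ∏ j ∈ Ico M N, (1 - x / (j + 1)) ≤ ∏ j ∈ Ico M N, Real.exp (-(x / (j + 1))) := by
      apply Finset.prod_le_prod
      · intro j hj
        have hj' : M ≤ j := (Finset.mem_Ico.mp hj).1
        have h1 : x ≤ (j:ℝ) + 1 := by
          have : (M:ℝ) ≤ j := by exact_mod_cast hj'
          linarith
        have : x / ((j:ℝ) + 1) ≤ 1 := div_le_one_of_le₀ h1 (by positivity)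
        linarith
      · intro j _
        have := Real.add_one_le_exp (-(x / ((j:ℝ) + 1)))
        linarith
    have hpos : 0 ≤ ∏ j ∈ Ico M N, (1 - x / (j + 1)) := by
      apply Finset.prod_nonneg
      intro j hj
      have hj' : M ≤ j := (Finset.mem_Ico.mp hj).1
      have h1 : x ≤ (j:ℝ) + 1 := by
        have : (M:ℝ) ≤ j := by exact_mod_cast hj'
        linarith
      have : x / ((j:ℝ) + 1) ≤ 1 := div_le_one_of_le₀ h1 (by positivity)
      linarith
    have hexp : ∏ j ∈ Ico M N, Real.exp (-(x / (j + 1))) = Real.exp (-(∑ j ∈ Ico M N, x / (j+1))) := by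
      rw [← Real.exp_sum, Finset.sum_neg_distrib]
    have hsum : ∑ j ∈ Ico M N, x / ((j:ℝ)+1) = x * H N - x * H M := by
      have hHd : H N - H M = ∑ j ∈ Ico M N, (1:ℝ)/((j:ℝ)+1) := by
        rw [hH]
        simp only []
        rw [← Finset.sum_range_add_sum_Ico (fun j : ℕ => (1:ℝ)/((j:ℝ)+1)) hN]
        ring
      have h2 : ∑ j ∈ Ico M N, x / ((j:ℝ)+1) = x * ∑ j ∈ Ico M N, (1:ℝ)/((j:ℝ)+1) := by
        rw [Finset.mul_sum]
        apply Finset.sum_congr rfl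
        intro j _
        rw [mul_one_div]
      rw [h2, ← hHd]
      ring
    calc |bprod x N| = |bprod x M| * |∏ j ∈ Ico M N, (1 - x / (j + 1))| := by
          rw [hsplit, abs_mul]
      _ ≤ |bprod x M| * (Real.exp (-(∑ j ∈ Ico M N, x / (j+1)))) := by
          apply mul_le_mul_of_nonneg_left _ (abs_nonneg _)
          rw [abs_of_nonneg hpos, ← hexp]
          exact hbd
      _ = |bprod x M| * Real.exp (x * H M) * Real.exp (-(x * H N)) := by
          rw [hsum, mul_assoc, ← Real.exp_add]
          ring_nf
  have hHtop : Tendsto H atTop atTop :=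
    Real.tendsto_sum_range_one_div_nat_succ_atTop
  have hexp0 : Tendsto (fun N => |bprod x M| * Real.exp (x * H M) * Real.exp (-(x * H N))) atTop (nhds 0) := by
    rw [show (0:ℝ) = |bprod x M| * Real.exp (x * H M) * 0 by ring]
    apply Tendsto.const_mul
    apply Real.tendsto_exp_atBot.comp
    exact tendsto_neg_atTop_atBot.comp (hHtop.const_mul_atTop hx)
  apply squeeze_zero_norm' _ hexp0
  filter_upwards [eventually_ge_atTop M] with N hN
  exact key N hN

lemma tsum_alt_gbinom {x : ℝ} (hx : 0 < x) :
    ∑' n : ℕ, (-1:ℝ)^(n+1) * gbinom x (n+1) = -1 := by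
  have hs : Summable (fun n => (-1:ℝ)^n * gbinom x n) := by
    apply Summable.of_abs
    have : (fun n => |(-1:ℝ)^n * gbinom x n|) = fun n => |gbinom x n| := by
      funext n
      rw [abs_mul, abs_pow, abs_neg, abs_one, one_pow, one_mul]
    rw [this]
    exact summable_abs_gbinom hx
  have hzero : ∑' n : ℕ, (-1:ℝ)^n * gbinom x n = 0 := by
    have h1 : Tendsto (fun N => ∑ n ∈ range N, (-1:ℝ)^n * gbinom x n) atTop
        (nhds (∑' n : ℕ, (-1:ℝ)^n * gbinom x n)) := hs.hasSum.tendsto_sum_nat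
    have h2 : Tendsto (fun N => ∑ n ∈ range (N+1), (-1:ℝ)^n * gbinom x n) atTop
        (nhds (∑' n : ℕ, (-1:ℝ)^n * gbinom x n)) :=
      h1.comp (tendsto_add_atTop_nat 1)
    have h3 : Tendsto (fun N => ∑ n ∈ range (N+1), (-1:ℝ)^n * gbinom x n) atTop (nhds 0) := by
      simp only [sum_alt_gbinom]
      exact bprod_tendsto_zero hx
    exact tendsto_nhds_unique h2 h3
  have := Summable.tsum_eq_zero_add hs
  rw [hzero] at this
  have h0 : (-1:ℝ)^0 * gbinom x 0 = 1 := by simp [gbinom]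
  rw [h0] at this
  linarith

section Box
variable {t lam : ℝ} {α : ℝ → ℝ}

def Box (R : ℕ) (t : ℝ) : Set (Fin R → ℝ) := Set.univ.pi fun _ => Set.Icc (0:ℝ) t

lemma box_measurable {R : ℕ} : MeasurableSet (Box R t) :=
  MeasurableSet.univ_pi fun _ => measurableSet_Icc

lemma box_compact {R : ℕ} : IsCompact (Box R t) :=
  isCompact_univ_pi fun _ => isCompact_Icc

lemma integral_box_prod (R : ℕ) (t : ℝ) (g : ℝ → ℝ) :
    ∫ s : Fin R → ℝ in Box R t, ∏ j, g (s j) = (∫ x in Set.Icc (0:ℝ) t, g x) ^ R := by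
  rw [← MeasureTheory.integral_indicator box_measurable]
  have h : (Box R t).indicator (fun s : Fin R → ℝ => ∏ j, g (s j))
      = fun s => ∏ j, (Set.Icc (0:ℝ) t).indicator g (s j) := by
    funext s
    by_cases hs : s ∈ Box R t
    · rw [Set.indicator_of_mem hs]
      exact Finset.prod_congr rfl fun j _ =>
        (Set.indicator_of_mem (hs j (Set.mem_univ j)) g).symm
    · rw [Set.indicator_of_notMem hs]
      have : ∃ j, s j ∉ Set.Icc (0:ℝ) t := by
        by_contra hc
        push_neg at hc
        exact hs fun j _ => hc j
      obtain ⟨j, hj⟩ := this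
      exact (Finset.prod_eq_zero (Finset.mem_univ j) (Set.indicator_of_notMem hj g)).symm
  rw [h]
  beta_reduce
  rw [MeasureTheory.volume_pi, MeasureTheory.integral_fintype_prod_eq_pow (ι := Fin R) ((Set.Icc (0:ℝ) t).indicator g),
    Fintype.card_fin, MeasureTheory.integral_indicator measurableSet_Icc]

lemma rpow_betaSum (hc : 0 < lam) {R : ℕ} (s : Fin R → ℝ) :
    lam ^ betaSum α s = ∏ j, lam ^ α (s j) :=
  Real.rpow_sum_of_pos hc _ _

end Box

section Main
variable {α : ℝ → ℝ} {lam t : ℝ}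
variable (hα : ∀ s ∈ Set.Ici (0 : ℝ), α s ∈ Set.Ioo (0 : ℝ) 1)
  (hαc : ContinuousOn α (Set.Ici 0)) (hlam : 0 < lam) (ht : 0 < t)
include hα hαc hlam ht

lemma mem_box_imp {R : ℕ} {s : Fin R → ℝ} (hs : s ∈ Box R t) (j : Fin R) :
    s j ∈ Set.Icc (0:ℝ) t := hs j (Set.mem_univ j)

omit hα hαc hlam ht in
lemma box_sub_ici {R : ℕ} {s : Fin R → ℝ} (hs : s ∈ Box R t) (j : Fin R) :
    s j ∈ Set.Ici (0:ℝ) := (hs j (Set.mem_univ j)).1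

lemma beta_pos {r : ℕ} {s : Fin (r+1) → ℝ} (hs : s ∈ Box (r+1) t) :
    0 < betaSum α s := by
  apply Finset.sum_pos
  · intro j _
    exact (hα _ (box_sub_ici hs j)).1
  · exact Finset.univ_nonempty

lemma beta_le {r : ℕ} {s : Fin (r+1) → ℝ} (hs : s ∈ Box (r+1) t) :
    betaSum α s ≤ (r+1 : ℕ) := by
  have : betaSum α s ≤ ∑ _j : Fin (r+1), (1:ℝ) := by
    apply Finset.sum_le_sum
    intro j _
    exact (hα _ (box_sub_ici hs j)).2.le
  simpa using this

omit hα hlam ht in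
lemma beta_contOn {R : ℕ} : ContinuousOn (fun s : Fin R → ℝ => betaSum α s) (Box R t) := by
  unfold betaSum
  apply continuousOn_finset_sum
  intro j _
  apply hαc.comp (continuous_apply j).continuousOn
  intro s hs
  exact (hs j (Set.mem_univ j)).1

omit hα hαc hlam ht in
lemma cont_rpow (hlam' : 0 < lam) : Continuous fun y : ℝ => lam ^ y := by
  have h : (fun y : ℝ => lam ^ y) = fun y => Real.exp (Real.log lam * y) := by
    funext y; exact Real.rpow_def_of_pos hlam' y
  rw [h]
  exact Real.continuous_exp.comp (continuous_const.mul continuous_id)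

omit hα hαc hlam ht in
lemma cont_gbinom (m : ℕ) : Continuous fun x : ℝ => gbinom x m := by
  unfold gbinom
  apply Continuous.div_const
  exact continuous_finset_prod _ fun j _ => continuous_id.sub continuous_const

lemma f_contOn {r : ℕ} (m : ℕ) :
    ContinuousOn (fun s : Fin (r+1) → ℝ =>
      lam ^ betaSum α s * gbinom (betaSum α s) m) (Box (r+1) t) := by
  have hb : ContinuousOn (fun s : Fin (r+1) → ℝ => betaSum α s) (Box (r+1) t) :=
    beta_contOn hαc
  exact ((cont_rpow hlam).comp_continuousOn hb).mul ((cont_gbinom m).comp_continuousOn hb)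

lemma f_integrableOn {r : ℕ} (m : ℕ) :
    IntegrableOn (fun s : Fin (r+1) → ℝ =>
      lam ^ betaSum α s * gbinom (betaSum α s) m) (Box (r+1) t) :=
  (f_contOn hα hαc hlam ht m).integrableOn_compact box_compact

lemma fabs_integrableOn {r : ℕ} (m : ℕ) :
    IntegrableOn (fun s : Fin (r+1) → ℝ =>
      lam ^ betaSum α s * |gbinom (betaSum α s) m|) (Box (r+1) t) := by
  have hb : ContinuousOn (fun s : Fin (r+1) → ℝ => betaSum α s) (Box (r+1) t) :=
    beta_contOn hαc
  exact (((cont_rpow hlam).comp_continuousOn hb).mul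
    (((cont_gbinom m).abs).comp_continuousOn hb)).integrableOn_compact box_compact

lemma g2_integrableOn {r : ℕ} :
    IntegrableOn (fun s : Fin (r+1) → ℝ => 4 * (2*lam) ^ betaSum α s) (Box (r+1) t) := by
  have hb : ContinuousOn (fun s : Fin (r+1) → ℝ => betaSum α s) (Box (r+1) t) :=
    beta_contOn hαc
  exact (continuous_const.continuousOn.mul
    ((cont_rpow (by linarith)).comp_continuousOn hb)).integrableOn_compact box_compact

-- pointwise bound on box for the partial sums
lemma pointwise_sum_bound {r : ℕ} {s : Fin (r+1) → ℝ} (hs : s ∈ Box (r+1) t) (N : ℕ) :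
    ∑ n ∈ range N, lam ^ betaSum α s * |gbinom (betaSum α s) (n+1)|
      ≤ 4 * (2*lam) ^ betaSum α s := by
  set x := betaSum α s with hx
  have hxpos : 0 < x := beta_pos hα hαc hlam ht hs
  have hsum : Summable fun n => |gbinom x (n+1)| :=
    ((_root_.summable_nat_add_iff (f := fun n => |gbinom x n|) 1).mpr
      (summable_abs_gbinom hxpos))
  have h1 : ∑ n ∈ range N, |gbinom x (n+1)| ≤ ∑' n, |gbinom x (n+1)| :=
    Summable.sum_le_tsum _ (fun n _ => abs_nonneg _) hsum
  have h2 : ∑' n, |gbinom x (n+1)| ≤ ∑' n, |gbinom x n| :=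
    Summable.tsum_le_tsum_of_inj (· + 1) (add_left_injective 1) (fun _ _ => abs_nonneg _)
      (fun _ => le_rfl) hsum (summable_abs_gbinom hxpos)
  have h3 : ∑' n, |gbinom x n| ≤ (2:ℝ) ^ (x + 2) := tsum_abs_gbinom_le hxpos
  have hcollect : ∑ n ∈ range N, lam ^ x * |gbinom x (n+1)|
      = lam ^ x * ∑ n ∈ range N, |gbinom x (n+1)| := by rw [Finset.mul_sum]
  rw [hcollect]
  have hlamx : (0:ℝ) ≤ lam ^ x := (Real.rpow_pos_of_pos hlam x).le
  have : lam ^ x * ∑ n ∈ range N, |gbinom x (n+1)| ≤ lam ^ x * (2:ℝ) ^ (x+2) :=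
    mul_le_mul_of_nonneg_left (h1.trans (h2.trans h3)) hlamx
  refine this.trans ?_
  have : lam ^ x * (2:ℝ) ^ (x + 2) = 4 * (2*lam) ^ x := by
    rw [Real.rpow_add (by norm_num : (0:ℝ) < 2), Real.mul_rpow (by norm_num) hlam.le]
    norm_num [Real.rpow_natCast]
    ring
  rw [this]


lemma Aabs_partial_le (r N : ℕ) :
    ∑ n ∈ range N, (∫ s : Fin (r+1) → ℝ in Box (r+1) t,
        lam ^ betaSum α s * |gbinom (betaSum α s) (n+1)|)
      ≤ 4 * (∫ x in Set.Icc (0:ℝ) t, (2*lam) ^ α x) ^ (r+1) := by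
  rw [← MeasureTheory.integral_finset_sum _
    (fun n _ => fabs_integrableOn hα hαc hlam ht (n+1))]
  have step : ∫ s : Fin (r+1) → ℝ in Box (r+1) t,
      (∑ n ∈ range N, lam ^ betaSum α s * |gbinom (betaSum α s) (n+1)|)
      ≤ ∫ s : Fin (r+1) → ℝ in Box (r+1) t, 4 * (2*lam) ^ betaSum α s := by
    apply setIntegral_mono_on
    · exact (integrable_finset_sum _ (fun n _ => fabs_integrableOn hα hαc hlam ht (n+1)))
    · exact g2_integrableOn hα hαc hlam ht
    · exact box_measurable
    · intro s hs
      exact pointwise_sum_bound hα hαc hlam ht hs N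
  refine step.trans ?_
  have h4 : ∫ s : Fin (r+1) → ℝ in Box (r+1) t, 4 * (2*lam) ^ betaSum α s
      = 4 * ∫ s : Fin (r+1) → ℝ in Box (r+1) t, (2*lam) ^ betaSum α s :=
    integral_const_mul 4 _
  rw [h4]
  have h5 : ∫ s : Fin (r+1) → ℝ in Box (r+1) t, (2*lam) ^ betaSum α s
      = (∫ x in Set.Icc (0:ℝ) t, (2*lam) ^ α x) ^ (r+1) := by
    rw [← integral_box_prod (r+1) t (fun x => (2*lam) ^ α x)]
    apply setIntegral_congr_fun box_measurable
    intro s _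
    exact rpow_betaSum (by linarith)  s
  rw [h5]

lemma Aabs_summable (r : ℕ) :
    Summable (fun n => ∫ s : Fin (r+1) → ℝ in Box (r+1) t,
      lam ^ betaSum α s * |gbinom (betaSum α s) (n+1)|) := by
  apply summable_of_sum_range_le
  · intro n
    apply setIntegral_nonneg box_measurable
    intro s _
    have := Real.rpow_pos_of_pos hlam (betaSum α s)
    positivity
  · exact Aabs_partial_le hα hαc hlam ht r

lemma Aabs_tsum_le (r : ℕ) :
    ∑' n, (∫ s : Fin (r+1) → ℝ in Box (r+1) t,
        lam ^ betaSum α s * |gbinom (betaSum α s) (n+1)|)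
      ≤ 4 * (∫ x in Set.Icc (0:ℝ) t, (2*lam) ^ α x) ^ (r+1) := by
  apply Real.tsum_le_of_sum_range_le
  · intro n
    apply setIntegral_nonneg box_measurable
    intro s _
    have := Real.rpow_pos_of_pos hlam (betaSum α s)
    positivity
  · exact Aabs_partial_le hα hαc hlam ht r

lemma term_abs_le (n r : ℕ) :
    |((-1 : ℝ) ^ ((n + 1) + (r + 1)) / ((r + 1).factorial : ℝ)) *
        ∫ s : Fin (r + 1) → ℝ in Box (r+1) t,
          lam ^ betaSum α s * gbinom (betaSum α s) (n + 1)|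
      ≤ (1 / ((r + 1).factorial : ℝ)) *
        ∫ s : Fin (r+1) → ℝ in Box (r+1) t,
          lam ^ betaSum α s * |gbinom (betaSum α s) (n+1)| := by
  rw [abs_mul, abs_div, abs_pow, abs_neg, abs_one, one_pow]
  have hfac : |((r + 1).factorial : ℝ)| = ((r + 1).factorial : ℝ) := by
    rw [abs_of_pos]
    exact_mod_cast Nat.factorial_pos _
  rw [hfac]
  apply mul_le_mul_of_nonneg_left _ (by positivity)
  have h1 := MeasureTheory.norm_integral_le_integral_norm
    (μ := volume.restrict (Box (r+1) t))
    (f := fun s : Fin (r+1) → ℝ => lam ^ betaSum α s * gbinom (betaSum α s) (n + 1))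
  rw [Real.norm_eq_abs] at h1
  refine h1.trans (le_of_eq ?_)
  apply setIntegral_congr_fun box_measurable
  intro s _
  show ‖_‖ = _
  rw [Real.norm_eq_abs, abs_mul, abs_of_pos (Real.rpow_pos_of_pos hlam _)]


lemma inner_step (r : ℕ) :
    ∑' n : ℕ, (((-1 : ℝ) ^ ((n + 1) + (r + 1)) / ((r + 1).factorial : ℝ)) *
        ∫ s : Fin (r + 1) → ℝ in Box (r+1) t,
          lam ^ betaSum α s * gbinom (betaSum α s) (n + 1))
      = (-1 : ℝ) ^ r * (∫ x in Set.Icc (0:ℝ) t, lam ^ α x) ^ (r+1)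
          / ((r + 1).factorial : ℝ) := by
  set μ := (volume : Measure (Fin (r+1) → ℝ)).restrict (Box (r+1) t) with hμ
  set F : ℕ → (Fin (r+1) → ℝ) → ℝ := fun n s =>
    (-1 : ℝ) ^ (n+1) * (lam ^ betaSum α s * gbinom (betaSum α s) (n + 1)) with hF
  have hmeas : ∀ n, AEStronglyMeasurable (F n) μ := by
    intro n
    exact ContinuousOn.aestronglyMeasurable
      (continuous_const.continuousOn.mul (f_contOn hα hαc hlam ht (n+1))) box_measurable
  have habs : ∀ s ∈ Box (r+1) t, Summable fun n => |gbinom (betaSum α s) (n+1)| := by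
    intro s hs
    exact (_root_.summable_nat_add_iff (f := fun n => |gbinom (betaSum α s) n|) 1).mpr
      (summable_abs_gbinom (beta_pos hα hαc hlam ht hs))
  have habsF : ∀ s ∈ Box (r+1) t, Summable fun n => |F n s| := by
    intro s hs
    have : (fun n => |F n s|)
        = fun n => lam ^ betaSum α s * |gbinom (betaSum α s) (n+1)| := by
      funext n
      rw [hF]
      rw [abs_mul, abs_mul, abs_pow, abs_neg, abs_one, one_pow, one_mul,
        abs_of_pos (Real.rpow_pos_of_pos hlam _)]
    rw [this]
    exact (habs s hs).mul_left _
  have hf' : ∑' n, ∫⁻ s, ‖F n s‖₊ ∂μ ≠ ⊤ := by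
    rw [← MeasureTheory.lintegral_tsum (fun n => (hmeas n).aemeasurable.nnnorm.coe_nnreal_ennreal)]
    have hbd : ∀ᵐ s ∂μ, (∑' n, (‖F n s‖₊ : ENNReal))
        ≤ ENNReal.ofReal (4 * (2*lam) ^ betaSum α s) := by
      rw [hμ]
      rw [ae_restrict_iff' box_measurable]
      apply ae_of_all
      intro s hs
      have h1 : ∀ n : ℕ, (‖F n s‖₊ : ENNReal) = ENNReal.ofReal (|F n s|) := by
        intro n
        rw [← Real.norm_eq_abs]; exact (ENNReal.ofReal_eq_coe_nnreal (norm_nonneg _)).symm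
      rw [tsum_congr h1, ← ENNReal.ofReal_tsum_of_nonneg (fun n => abs_nonneg _) (habsF s hs)]
      apply ENNReal.ofReal_le_ofReal
      have heq : (fun n => |F n s|)
          = fun n => lam ^ betaSum α s * |gbinom (betaSum α s) (n+1)| := by
        funext n
        rw [hF]
        rw [abs_mul, abs_mul, abs_pow, abs_neg, abs_one, one_pow, one_mul,
          abs_of_pos (Real.rpow_pos_of_pos hlam _)]
      rw [heq]
      apply Real.tsum_le_of_sum_range_le
      · intro n
        have := Real.rpow_pos_of_pos hlam (betaSum α s)
        positivity
      · exact fun N => pointwise_sum_bound hα hαc hlam ht hs N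
    have hfin : ∫⁻ s, ENNReal.ofReal (4 * (2*lam) ^ betaSum α s) ∂μ < ⊤ :=
      (g2_integrableOn hα hαc hlam ht).lintegral_lt_top
    exact ((MeasureTheory.lintegral_mono_ae hbd).trans_lt hfin).ne
  have hswap := MeasureTheory.integral_tsum hmeas hf'
  have hterm : ∀ n : ℕ,
      ((-1 : ℝ) ^ ((n + 1) + (r + 1)) / ((r + 1).factorial : ℝ)) *
        ∫ s : Fin (r + 1) → ℝ in Box (r+1) t,
          lam ^ betaSum α s * gbinom (betaSum α s) (n + 1)
      = ((-1 : ℝ) ^ (r + 1) / ((r + 1).factorial : ℝ)) * ∫ s, F n s ∂μ := by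
    intro n
    rw [hF]
    rw [MeasureTheory.integral_const_mul]
    rw [pow_add]
    ring
  rw [tsum_congr hterm, tsum_mul_left, ← hswap]
  have hin : ∫ s, (∑' n, F n s) ∂μ = -(∫ x in Set.Icc (0:ℝ) t, lam ^ α x) ^ (r+1) := by
    have h2 : ∫ s, (∑' n, F n s) ∂μ = ∫ s, -(lam ^ betaSum α s) ∂μ := by
      apply setIntegral_congr_fun box_measurable
      intro s hs
      show (∑' n, F n s) = -(lam ^ betaSum α s)
      have h3 : (fun n => F n s)
          = fun n => lam ^ betaSum α s * ((-1:ℝ)^(n+1) * gbinom (betaSum α s) (n+1)) := by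
        funext n; rw [hF]; ring
      rw [h3, tsum_mul_left, tsum_alt_gbinom (beta_pos hα hαc hlam ht hs)]
      ring
    rw [h2, MeasureTheory.integral_neg, hμ]
    congr 1
    rw [← integral_box_prod (r+1) t (fun x => lam ^ α x)]
    apply setIntegral_congr_fun box_measurable
    intro s _
    exact rpow_betaSum hlam s
  rw [hin]
  rw [pow_add]
  ring

end Main

theorem stmt_17 (α : ℝ → ℝ) (hα : ∀ s ∈ Set.Ici (0 : ℝ), α s ∈ Set.Ioo (0 : ℝ) 1)
    (hαc : ContinuousOn α (Set.Ici 0)) (lam : ℝ) (hlam : 0 < lam) (t : ℝ) (ht : 0 < t) :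
    Real.exp (-(∫ s in (0 : ℝ)..t, lam ^ α s))
        + ∑' n : ℕ, ∑' r : ℕ,
            ((-1 : ℝ) ^ ((n + 1) + (r + 1)) / ((r + 1).factorial : ℝ)) *
              ∫ s : Fin (r + 1) → ℝ in Set.univ.pi (fun _ => Set.Icc (0 : ℝ) t),
                lam ^ betaSum α s * gbinom (betaSum α s) (n + 1)
      = 1 := by
  set I := ∫ x in Set.Icc (0:ℝ) t, lam ^ α x with hI
  set J2 := ∫ x in Set.Icc (0:ℝ) t, (2*lam) ^ α x with hJ2
  set T : ℕ → ℕ → ℝ := fun n r =>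
    ((-1 : ℝ) ^ ((n + 1) + (r + 1)) / ((r + 1).factorial : ℝ)) *
      ∫ s : Fin (r + 1) → ℝ in Box (r+1) t,
        lam ^ betaSum α s * gbinom (betaSum α s) (n + 1) with hT
  set A : ℕ → ℕ → ℝ := fun n r =>
    (1 / ((r + 1).factorial : ℝ)) *
      ∫ s : Fin (r+1) → ℝ in Box (r+1) t,
        lam ^ betaSum α s * |gbinom (betaSum α s) (n+1)| with hA
  have habs_le : ∀ n r, |T n r| ≤ A n r := fun n r => term_abs_le hα hαc hlam ht n r
  have hAsum : ∀ r, Summable fun n => A n r :=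
    fun r => (Aabs_summable hα hαc hlam ht r).mul_left _
  have hslice : ∀ r, Summable fun n => |T n r| :=
    fun r => Summable.of_nonneg_of_le (fun n => abs_nonneg _) (fun n => habs_le n r) (hAsum r)
  have hAtsum_le : ∀ r, ∑' n, A n r ≤ (1 / ((r+1).factorial : ℝ)) * (4 * J2 ^ (r+1)) := by
    intro r
    rw [hA]
    rw [tsum_mul_left]
    apply mul_le_mul_of_nonneg_left (Aabs_tsum_le hα hαc hlam ht r) (by positivity)
  have hslice_tsum_le : ∀ r, ∑' n, |T n r| ≤ (1 / ((r+1).factorial : ℝ)) * (4 * J2 ^ (r+1)) :=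
    fun r => (Summable.tsum_le_tsum (fun n => habs_le n r) (hslice r) (hAsum r)).trans (hAtsum_le r)
  have hc_summable : Summable fun r : ℕ => (1 / (((r+1).factorial : ℕ) : ℝ)) * (4 * J2 ^ (r+1)) := by
    have h1 : Summable fun r : ℕ => J2 ^ (r+1) / (((r+1).factorial : ℕ) : ℝ) :=
      (_root_.summable_nat_add_iff (f := fun n => J2 ^ n / ((n.factorial : ℕ) : ℝ)) 1).mpr
        (Real.summable_pow_div_factorial J2)
    have h2 := h1.mul_left 4
    apply h2.congr
    intro r
    field_simp
  have hG : Summable fun p : ℕ × ℕ => |T p.2 p.1| := by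
    apply (summable_prod_of_nonneg (fun p => abs_nonneg _)).mpr
    constructor
    · exact fun r => hslice r
    · apply Summable.of_nonneg_of_le (fun r => tsum_nonneg (fun n => abs_nonneg _))
        (fun r => hslice_tsum_le r) hc_summable
  have hTsummable : Summable (Function.uncurry fun r n => T n r) := by
    apply Summable.of_abs
    exact hG
  have hcomm : ∑' n : ℕ, ∑' r : ℕ, T n r = ∑' r : ℕ, ∑' n : ℕ, T n r :=
    Summable.tsum_comm hTsummable
  have hmain : ∑' r : ℕ, ∑' n : ℕ, T n r = 1 - Real.exp (-I) := by
    have hstep : ∀ r : ℕ, ∑' n : ℕ, T n r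
        = (-1 : ℝ) ^ r * I ^ (r+1) / ((r + 1).factorial : ℝ) :=
      fun r => inner_step hα hαc hlam ht r
    rw [tsum_congr hstep]
    have hexp : Real.exp (-I) = ∑' n : ℕ, (-I) ^ n / (n.factorial : ℝ) := by
      rw [Real.exp_eq_exp_ℝ, NormedSpace.exp_eq_tsum_div]
    have hsum_exp : Summable fun n : ℕ => (-I) ^ n / (n.factorial : ℝ) :=
      Real.summable_pow_div_factorial (-I)
    have hshift := Summable.tsum_eq_zero_add hsum_exp
    have heq : ∀ r : ℕ, (-1 : ℝ) ^ r * I ^ (r+1) / ((r + 1).factorial : ℝ)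
        = -((-I) ^ (r+1) / ((r+1).factorial : ℝ)) := by
      intro r
      rw [neg_pow I (r+1), pow_succ ((-1:ℝ)) r]
      ring
    rw [tsum_congr heq, tsum_neg]
    rw [hexp, hshift]
    simp
  have hfront : Real.exp (-(∫ s in (0 : ℝ)..t, lam ^ α s)) = Real.exp (-I) := by
    congr 1
    rw [hI, intervalIntegral.integral_of_le ht.le, MeasureTheory.integral_Icc_eq_integral_Ioc]
  calc Real.exp (-(∫ s in (0 : ℝ)..t, lam ^ α s))
        + ∑' n : ℕ, ∑' r : ℕ,
            ((-1 : ℝ) ^ ((n + 1) + (r + 1)) / ((r + 1).factorial : ℝ)) *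
              ∫ s : Fin (r + 1) → ℝ in Set.univ.pi (fun _ => Set.Icc (0 : ℝ) t),
                lam ^ betaSum α s * gbinom (betaSum α s) (n + 1)
      = Real.exp (-I) + ∑' n : ℕ, ∑' r : ℕ, T n r := by rw [hfront]; rfl
    _ = Real.exp (-I) + (1 - Real.exp (-I)) := by rw [hcomm, hmain]
    _ = 1 := by ring
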